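/- Let $n \in \mathbb{Z}$, $\Delta_n(t) = nt^2-(2n+1)t+n$, and $\Lambda_n = \mathbb{Z}[t,t^{-1}]/(\Delta_n)$ with involution induced by $t \mapsto t^{-1}$. Let $U(\Lambda_n)$ be the group of unitary units. Then the classes of $+1$ and $-1$ in the quotient $U(\Lambda_n)/\{t^k\}_{k\in\mathbb{Z}}$ are distinct except precisely in the cases $n = 0$ and $n = -1$. Equivalently: there exist integers $a, b$ with $t^a \equiv -t^b \bmod \Delta_n$ in $\mathbb{Z}[t,t^{-1}]$ if and only if $n \in \{0, -1\}$. -/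

import Mathlib

open LaurentPolynomial in
/-- `Δₙ = n t² - (2n+1) t + n` as a Laurent polynomial over `ℤ`. -/
noncomputable def DeltaL (n : ℤ) : LaurentPolynomial ℤ :=
  LaurentPolynomial.C n * T 2 - LaurentPolynomial.C (2 * n + 1) * T 1 + LaurentPolynomial.C n

open LaurentPolynomial in
/-- Evaluation of an integer Laurent polynomial at a complex unit. -/
noncomputable def LEval (u : ℂˣ) : LaurentPolynomial ℤ →ₐ[ℤ] ℂ :=
  AddMonoidAlgebra.lift ℤ ℂ ℤ ((Units.coeHom ℂ).comp (zpowersHom ℂˣ u))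

open LaurentPolynomial in
lemma LEval_T (u : ℂˣ) (a : ℤ) : LEval u (T a) = (u : ℂ) ^ a := by
  rw [LEval, T, AddMonoidAlgebra.lift_single]; simp

open LaurentPolynomial in
lemma LEval_C (u : ℂˣ) (r : ℤ) : LEval u (LaurentPolynomial.C r) = (r : ℂ) := by
  rw [LEval, LaurentPolynomial.C]
  show (AddMonoidAlgebra.lift ℤ ℂ ℤ _) (AddMonoidAlgebra.single (0 : ℤ) r) = _
  rw [AddMonoidAlgebra.lift_single]; simp

lemma real_pow_eq_one {x : ℝ} (hx : 0 ≤ x) {k : ℕ} (hk : k ≠ 0) (h : x ^ k = 1) : x = 1 := by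
  rcases lt_trichotomy x 1 with h1 | h1 | h1
  · have := pow_lt_one₀ hx h1 hk; simp [h] at this
  · exact h1
  · have := one_lt_pow₀ h1 hk; simp [h] at this

/-- the classes of `+1` and `-1` agree in `U(Λₙ)/{tᵏ}` — equivalently,
`tᵃ ≡ -tᵇ mod Δₙ` for some integers `a, b` — if and only if `n = 0` or `n = -1`. -/
theorem stmt12 (n : ℤ) :
    (∃ a b : ℤ, (LaurentPolynomial.T a + LaurentPolynomial.T b : LaurentPolynomial ℤ) ∈
      Ideal.span {DeltaL n}) ↔ (n = 0 ∨ n = -1) := by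
  open LaurentPolynomial in
  constructor
  · rintro ⟨a, b, hm⟩
    by_contra hn
    push_neg at hn
    obtain ⟨hn0, hn1⟩ := hn
    have hn0' : (n : ℂ) ≠ 0 := Int.cast_ne_zero.2 hn0
    -- find a complex root ζ of n X² - (2n+1) X + n
    set p : Polynomial ℂ := Polynomial.C (n : ℂ) * Polynomial.X ^ 2 +
      Polynomial.C (-(2 * n + 1) : ℂ) * Polynomial.X + Polynomial.C (n : ℂ) with hp
    have hdeg : 0 < p.degree := by
      rw [hp, Polynomial.degree_quadratic hn0']; norm_num
    obtain ⟨z, hz⟩ := Complex.exists_root hdeg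
    rw [Polynomial.IsRoot, hp] at hz
    simp only [Polynomial.eval_add, Polynomial.eval_mul, Polynomial.eval_pow,
      Polynomial.eval_C, Polynomial.eval_X] at hz
    have hz0 : z ≠ 0 := by
      rintro rfl
      simp only [ne_eq, zero_pow, mul_zero, zero_add, add_zero] at hz
      norm_num at hz
      exact hn0 hz
    set u : ℂˣ := Units.mk0 z hz0 with hu
    have hDe : LEval u (DeltaL n) = 0 := by
      rw [DeltaL]
      simp only [map_add, map_sub, map_mul, LEval_C, LEval_T]
      have h2 : (u : ℂ) ^ (2 : ℤ) = z * z := by rw [zpow_two]; rfl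
      have h1 : (u : ℂ) ^ (1 : ℤ) = z := by rw [zpow_one]; rfl
      rw [h2, h1]
      push_cast
      linear_combination hz
    obtain ⟨f, hf⟩ := Ideal.mem_span_singleton'.1 hm
    have hz2 : z ^ a + z ^ b = 0 := by
      have := congrArg (LEval u) hf
      rw [map_mul, hDe, mul_zero, map_add, LEval_T, LEval_T] at this
      have huz : (u : ℂ) = z := rfl
      rw [huz] at this
      linear_combination -this
    have hab : a ≠ b := by
      rintro rfl
      have : z ^ a = 0 := by linear_combination hz2 / 2
      exact zpow_ne_zero a hz0 this
    -- z ^ (a - b) = -1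
    have hc : z ^ (a - b) = -1 := by
      rw [zpow_sub₀ hz0]
      field_simp [zpow_ne_zero b hz0]
      linear_combination hz2
    set c : ℤ := a - b with hcdef
    have hc0 : c ≠ 0 := sub_ne_zero.2 hab
    have h2c : z ^ (2 * c) = 1 := by
      rw [mul_comm, zpow_mul]
      norm_num [hc]
    set k : ℕ := (2 * c).natAbs with hk
    have hkne : k ≠ 0 := by
      simp [hk, Int.natAbs_eq_zero, hc0]
    have hzk : z ^ k = 1 := by
      rcases Int.natAbs_eq (2 * c) with he | he
      · rw [← zpow_natCast, ← he, h2c]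
      · rw [← zpow_natCast, show ((k : ℤ)) = -(2 * c) by omega, zpow_neg, h2c, inv_one]
    -- z is integral over ℤ, so is z⁻¹, so is z + z⁻¹
    have hint : IsIntegral ℤ z :=
      ⟨Polynomial.X ^ k - 1, by simpa using Polynomial.monic_X_pow_sub_C (1 : ℤ) hkne,
        by simp [hzk]⟩
    have hintinv : IsIntegral ℤ z⁻¹ :=
      ⟨Polynomial.X ^ k - 1, by simpa using Polynomial.monic_X_pow_sub_C (1 : ℤ) hkne,
        by simp [inv_pow, hzk]⟩
    have hintx : IsIntegral ℤ (z + z⁻¹) := hint.add hintinv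
    -- z + z⁻¹ = (2n+1)/n is rational
    have hxval : z + z⁻¹ = ((2 * n + 1 : ℂ)) / n := by
      field_simp
      linear_combination hz
    set q : ℚ := (2 * n + 1 : ℚ) / n with hq
    have hqmap : algebraMap ℚ ℂ q = z + z⁻¹ := by
      rw [hxval, hq]
      push_cast
      rfl
    have hintq : IsIntegral ℤ q := by
      have hinj : Function.Injective (algebraMap ℚ ℂ) := (algebraMap ℚ ℂ).injective
      rw [← isIntegral_algebraMap_iff hinj, hqmap]; exact hintx
    obtain ⟨m, hm'⟩ := IsIntegrallyClosed.isIntegral_iff.1 hintq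
    -- so n ∣ 2n+1, hence n = ±1
    have hmn : (m : ℚ) * n = 2 * n + 1 := by
      have : (m : ℚ) = (2 * n + 1) / n := by
        rw [← hq, ← hm']; simp
      rw [this]
      field_simp
    have hmnz : m * n = 2 * n + 1 := by exact_mod_cast hmn
    have hdvd : n ∣ 1 := ⟨m - 2, by linarith [hmnz]⟩
    rcases Int.isUnit_iff.1 (isUnit_of_dvd_one hdvd) with h1 | h1
    · -- n = 1 : then z + z⁻¹ = 3 but ‖z + z⁻¹‖ ≤ 2
      have hnorm : ‖z‖ = 1 := by
        have : ‖z‖ ^ k = 1 := by rw [← norm_pow, hzk, norm_one]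
        exact real_pow_eq_one (norm_nonneg z) hkne this
      have h3 : z + z⁻¹ = 3 := by rw [hxval, h1]; norm_num
      have hle : ‖z + z⁻¹‖ ≤ 2 := by
        calc ‖z + z⁻¹‖ ≤ ‖z‖ + ‖z⁻¹‖ := norm_add_le _ _
          _ = 2 := by rw [norm_inv, hnorm]; norm_num
      rw [h3] at hle
      norm_num at hle
    · exact hn1 h1
  · rintro (rfl | rfl)
    · refine ⟨0, 0, ?_⟩
      have hD : DeltaL 0 = -T 1 := by rw [DeltaL]; norm_num
      have : Ideal.span {DeltaL 0} = ⊤ := by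
        rw [hD, Ideal.span_singleton_eq_top]
        exact (isUnit_T 1).neg
      rw [this]; trivial
    · refine ⟨3, 0, Ideal.mem_span_singleton'.2 ⟨-(T 1) - 1, ?_⟩⟩
      have hD : DeltaL (-1) = -T 2 + T 1 - 1 := by rw [DeltaL]; norm_num; ring
      have h12 : (T 1 * T 2 : LaurentPolynomial ℤ) = T 3 := by rw [← T_add]; norm_num
      have h11 : (T 1 * T 1 : LaurentPolynomial ℤ) = T 2 := by rw [← T_add]; norm_num
      have h0 : (T 0 : LaurentPolynomial ℤ) = 1 := T_zero
      rw [hD]; linear_combination h12 - h11 - h0
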